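/- Let f : ℝ² → ℝ be smooth, let a^f(x,y,p) = f_xx(x,y) + 2f_xy(x,y)p + f_yy(x,y)p², and let I(x,y,p) = (a^f)_x(x,y,p) + p·(a^f)_y(x,y,p). If the origin (0,0,0) is a critical point of a^f (i.e. (a^f)_x(0,0,0) = (a^f)_y(0,0,0) = (a^f)_p(0,0,0) = 0), then I(0,0,0) = 0 and ∂I/∂p (0,0,0) = 0; that is, the flec-surface of a^f passes through the origin and has vertical tangent plane there. -/

import Mathlib

noncomputable section

lemma one_le_inf : ((⊤ : ℕ∞) : WithTop ℕ∞) ≠ 0 := by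
  simp

lemma inf_succ_le_inf : ((⊤ : ℕ∞) : WithTop ℕ∞) + 1 ≤ ((⊤ : ℕ∞) : WithTop ℕ∞) := by
  exact_mod_cast le_top

/-- Partial derivative in the first variable of a function on `ℝ × ℝ`. -/
def pdx (f : ℝ × ℝ → ℝ) (q : ℝ × ℝ) : ℝ := deriv (fun t => f (t, q.2)) q.1

/-- Partial derivative in the second variable of a function on `ℝ × ℝ`. -/
def pdy (f : ℝ × ℝ → ℝ) (q : ℝ × ℝ) : ℝ := deriv (fun t => f (q.1, t)) q.2

lemma pdx_eq {q : ℝ × ℝ} {g : ℝ × ℝ → ℝ} (hg : DifferentiableAt ℝ g q) :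
    pdx g q = fderiv ℝ g q ((1 : ℝ), (0 : ℝ)) := by
  have h2 : HasDerivAt (fun t : ℝ => (t, q.2)) ((1 : ℝ), (0 : ℝ)) q.1 :=
    (hasDerivAt_id q.1).prodMk (hasDerivAt_const _ _)
  have h := hg.hasFDerivAt.comp_hasDerivAt q.1 (by simpa using h2)
  exact h.deriv

lemma pdy_eq {q : ℝ × ℝ} {g : ℝ × ℝ → ℝ} (hg : DifferentiableAt ℝ g q) :
    pdy g q = fderiv ℝ g q ((0 : ℝ), (1 : ℝ)) := by
  have h2 : HasDerivAt (fun t : ℝ => (q.1, t)) ((0 : ℝ), (1 : ℝ)) q.2 :=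
    (hasDerivAt_const _ _).prodMk (hasDerivAt_id q.2)
  have h := hg.hasFDerivAt.comp_hasDerivAt q.2 (by simpa using h2)
  exact h.deriv

lemma contDiff_pdx {g : ℝ × ℝ → ℝ} (hg : ContDiff ℝ (⊤ : ℕ∞) g) :
    ContDiff ℝ (⊤ : ℕ∞) (pdx g) := by
  have : pdx g = fun q => fderiv ℝ g q ((1 : ℝ), (0 : ℝ)) := by
    funext q; exact pdx_eq (hg.differentiable one_le_inf q)
  rw [this]
  exact (hg.fderiv_right inf_succ_le_inf).clm_apply contDiff_const

lemma contDiff_pdy {g : ℝ × ℝ → ℝ} (hg : ContDiff ℝ (⊤ : ℕ∞) g) :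
    ContDiff ℝ (⊤ : ℕ∞) (pdy g) := by
  have : pdy g = fun q => fderiv ℝ g q ((0 : ℝ), (1 : ℝ)) := by
    funext q; exact pdy_eq (hg.differentiable one_le_inf q)
  rw [this]
  exact (hg.fderiv_right inf_succ_le_inf).clm_apply contDiff_const

lemma clairaut {g : ℝ × ℝ → ℝ} (hg : ContDiff ℝ (⊤ : ℕ∞) g) (q : ℝ × ℝ) :
    pdx (pdy g) q = pdy (pdx g) q := by
  have hfd : ContDiff ℝ (⊤ : ℕ∞) (fderiv ℝ g) := hg.fderiv_right inf_succ_le_inf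
  have hsymm := second_derivative_symmetric
    (f' := fderiv ℝ g) (f'' := fderiv ℝ (fderiv ℝ g) q)
    (fun y => (hg.differentiable one_le_inf y).hasFDerivAt)
    ((hfd.differentiable one_le_inf q).hasFDerivAt)
  have e1 : pdy g = fun z => fderiv ℝ g z ((0 : ℝ), (1 : ℝ)) := by
    funext z; exact pdy_eq (hg.differentiable one_le_inf z)
  have e2 : pdx g = fun z => fderiv ℝ g z ((1 : ℝ), (0 : ℝ)) := by
    funext z; exact pdx_eq (hg.differentiable one_le_inf z)
  rw [e1, e2]
  rw [pdx_eq (((hfd.differentiable one_le_inf).clm_apply (differentiable_const _)) q),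
      pdy_eq (((hfd.differentiable one_le_inf).clm_apply (differentiable_const _)) q)]
  rw [fderiv_clm_apply (hfd.differentiable one_le_inf q) (differentiableAt_const _),
      fderiv_clm_apply (hfd.differentiable one_le_inf q) (differentiableAt_const _)]
  simp [hsymm ((1:ℝ),(0:ℝ)) ((0:ℝ),(1:ℝ))]

lemma slice_x_hasDeriv {g : ℝ × ℝ → ℝ} (hg : ContDiff ℝ (⊤ : ℕ∞) g) (c x : ℝ) :
    HasDerivAt (fun s => g (s, c)) (pdx g (x, c)) x := by
  have hd : DifferentiableAt ℝ (fun s => g (s, c)) x :=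
    ((hg.differentiable one_le_inf).comp
      (differentiable_id.prodMk (differentiable_const c))) x
  exact hd.hasDerivAt

lemma slice_y_hasDeriv {g : ℝ × ℝ → ℝ} (hg : ContDiff ℝ (⊤ : ℕ∞) g) (c x : ℝ) :
    HasDerivAt (fun s => g (c, s)) (pdy g (c, x)) x := by
  have hd : DifferentiableAt ℝ (fun s => g (c, s)) x :=
    ((hg.differentiable one_le_inf).comp
      ((differentiable_const c).prodMk differentiable_id)) x
  exact hd.hasDerivAt


/-- Partial derivative in `x` of a function on `ℝ × ℝ × ℝ` (coordinates `(x, y, p)`). -/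
def pDx (F : ℝ × ℝ × ℝ → ℝ) (q : ℝ × ℝ × ℝ) : ℝ := deriv (fun t => F (t, q.2.1, q.2.2)) q.1

/-- Partial derivative in `y` of a function on `ℝ × ℝ × ℝ` (coordinates `(x, y, p)`). -/
def pDy (F : ℝ × ℝ × ℝ → ℝ) (q : ℝ × ℝ × ℝ) : ℝ := deriv (fun t => F (q.1, t, q.2.2)) q.2.1

/-- Partial derivative in `p` of a function on `ℝ × ℝ × ℝ` (coordinates `(x, y, p)`). -/
def pDp (F : ℝ × ℝ × ℝ → ℝ) (q : ℝ × ℝ × ℝ) : ℝ := deriv (fun t => F (q.1, q.2.1, t)) q.2.2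

/-- The asymptotic IDE function `a^f(x,y,p) = f_xx + 2 f_xy p + f_yy p²`. -/
def aIDE (f : ℝ × ℝ → ℝ) (q : ℝ × ℝ × ℝ) : ℝ :=
  pdx (pdx f) (q.1, q.2.1) + 2 * pdy (pdx f) (q.1, q.2.1) * q.2.2
    + pdy (pdy f) (q.1, q.2.1) * q.2.2 ^ 2

/-- The inflection function `I^F(x,y,p) = F_x + p·F_y`; its zero set is the flec-surface. -/
def inflFun (F : ℝ × ℝ × ℝ → ℝ) (q : ℝ × ℝ × ℝ) : ℝ := pDx F q + q.2.2 * pDy F q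

/-- Lemma F: if the origin is a critical point of `a^f`, then the
flec-surface of `a^f` passes through the origin and has vertical tangent plane there. -/
theorem lemmaF (f : ℝ × ℝ → ℝ) (hf : ContDiff ℝ (⊤ : ℕ∞) f)
    (hx : pDx (aIDE f) (0, 0, 0) = 0)
    (hy : pDy (aIDE f) (0, 0, 0) = 0)
    (hp : pDp (aIDE f) (0, 0, 0) = 0) :
    inflFun (aIDE f) (0, 0, 0) = 0 ∧ pDp (inflFun (aIDE f)) (0, 0, 0) = 0 := by
  set A := pdx (pdx f) with hAdef
  set B := pdy (pdx f) with hBdef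
  set C := pdy (pdy f) with hCdef
  have hfx : ContDiff ℝ (⊤ : ℕ∞) (pdx f) := contDiff_pdx hf
  have hfy : ContDiff ℝ (⊤ : ℕ∞) (pdy f) := contDiff_pdy hf
  have hA : ContDiff ℝ (⊤ : ℕ∞) A := contDiff_pdx hfx
  have hB : ContDiff ℝ (⊤ : ℕ∞) B := contDiff_pdy hfx
  have hC : ContDiff ℝ (⊤ : ℕ∞) C := contDiff_pdy hfy
  -- pDx of aIDE along the p-axis
  have pDxA : ∀ t : ℝ, pDx (aIDE f) (0, 0, t)
      = pdx A (0, 0) + 2 * pdx B (0, 0) * t + pdx C (0, 0) * t ^ 2 := by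
    intro t
    have h : HasDerivAt (fun s : ℝ => A (s, 0) + 2 * B (s, 0) * t + C (s, 0) * t ^ 2)
        (pdx A (0, 0) + 2 * pdx B (0, 0) * t + pdx C (0, 0) * t ^ 2) 0 := by
      exact (((slice_x_hasDeriv hA 0 0).add
        (((slice_x_hasDeriv hB 0 0).const_mul 2).mul_const t)).add
        ((slice_x_hasDeriv hC 0 0).mul_const (t ^ 2)))
    exact h.deriv
  -- pDy of aIDE along the p-axis
  have pDyA : ∀ t : ℝ, pDy (aIDE f) (0, 0, t)
      = pdy A (0, 0) + 2 * pdy B (0, 0) * t + pdy C (0, 0) * t ^ 2 := by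
    intro t
    have h : HasDerivAt (fun s : ℝ => A (0, s) + 2 * B (0, s) * t + C (0, s) * t ^ 2)
        (pdy A (0, 0) + 2 * pdy B (0, 0) * t + pdy C (0, 0) * t ^ 2) 0 := by
      exact (((slice_y_hasDeriv hA 0 0).add
        (((slice_y_hasDeriv hB 0 0).const_mul 2).mul_const t)).add
        ((slice_y_hasDeriv hC 0 0).mul_const (t ^ 2)))
    exact h.deriv
  have hx' : pdx A (0, 0) = 0 := by
    have := pDxA 0; rw [hx] at this; simpa using this.symm
  have hy' : pdy A (0, 0) = 0 := by
    have := pDyA 0; rw [hy] at this; simpa using this.symm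
  have hBx : pdx B (0, 0) = 0 := by
    rw [hBdef, clairaut hfx (0, 0), ← hAdef, hy']
  constructor
  · show pDx (aIDE f) (0, 0, 0) + (0 : ℝ) * pDy (aIDE f) (0, 0, 0) = 0
    rw [hx, hy]; ring
  · have hfun : (fun t : ℝ => inflFun (aIDE f) (0, 0, t))
        = fun t : ℝ => (pdx A (0, 0) + 2 * pdx B (0, 0) * t + pdx C (0, 0) * t ^ 2)
          + t * (pdy A (0, 0) + 2 * pdy B (0, 0) * t + pdy C (0, 0) * t ^ 2) := by
      funext t
      simp only [inflFun]
      rw [pDxA t, pDyA t]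
    have hg : HasDerivAt (fun t : ℝ => pdy A (0, 0) + 2 * pdy B (0, 0) * t
        + pdy C (0, 0) * t ^ 2)
        (2 * pdy B (0, 0) + pdy C (0, 0) * (2 * 0 ^ 1)) 0 := by
      have := ((hasDerivAt_const (0:ℝ) (pdy A (0, 0))).add
        ((hasDerivAt_id (0:ℝ)).const_mul (2 * pdy B (0, 0)))).add
        ((hasDerivAt_pow 2 (0:ℝ)).const_mul (pdy C (0, 0)))
      refine this.congr_deriv ?_
      norm_num
    have hpoly : HasDerivAt (fun t : ℝ =>
        (pdx A (0, 0) + 2 * pdx B (0, 0) * t + pdx C (0, 0) * t ^ 2)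
          + t * (pdy A (0, 0) + 2 * pdy B (0, 0) * t + pdy C (0, 0) * t ^ 2))
        (2 * pdx B (0, 0) + pdy A (0, 0)) 0 := by
      have h1 : HasDerivAt (fun t : ℝ =>
          pdx A (0, 0) + 2 * pdx B (0, 0) * t + pdx C (0, 0) * t ^ 2)
          (2 * pdx B (0, 0) + pdy C (0, 0) * 0) 0 := by
        have := ((hasDerivAt_const (0:ℝ) (pdx A (0, 0))).add
          ((hasDerivAt_id (0:ℝ)).const_mul (2 * pdx B (0, 0)))).add
          ((hasDerivAt_pow 2 (0:ℝ)).const_mul (pdx C (0, 0)))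
        refine this.congr_deriv ?_
        norm_num
      have h2 := (hasDerivAt_id (0:ℝ)).mul hg
      have h3 := h1.add h2
      refine h3.congr_deriv ?_
      simp only [id_eq]; ring
    have : pDp (inflFun (aIDE f)) (0, 0, 0)
        = 2 * pdx B (0, 0) + pdy A (0, 0) := by
      show deriv (fun t : ℝ => inflFun (aIDE f) (0, 0, t)) 0 = _
      rw [hfun]
      exact hpoly.deriv
    rw [this, hBx, hy']
    ring
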